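/- Every Bol*-AG-band is a CA-AG-groupoid; that is, if a magma S satisfies the left invertive law, the Bol* identity a·((b·c)·d) = ((a·b)·c)·d, and every element is idempotent (a·a = a for all a), then S satisfies cyclic associativity a·(b·c) = c·(a·b) for all a,b,c. -/
import Mathlib


theorem Bol_star_AG_band_is_CA_AG_groupoid {S : Type*} [Mul S]
    (li : ∀ a b c : S, (a * b) * c = (c * b) * a)
    (bol : ∀ a b c d : S, a * ((b * c) * d) = ((a * b) * c) * d)
    (idem : ∀ a : S, a * a = a) :
    ∀ a b c : S, a * (b * c) = c * (a * b) := by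
  -- medial law
  have med : ∀ a b c d : S, (a * b) * (c * d) = (a * c) * (b * d) := by
    intro a b c d
    calc (a * b) * (c * d) = ((c * d) * b) * a := li ..
      _ = ((b * d) * c) * a := by rw [li c d b]
      _ = (a * c) * (b * d) := li ..
  -- star law : x(yz) = (zx)y
  have star : ∀ x y z : S, x * (y * z) = (z * x) * y := by
    intro x y z
    calc x * (y * z) = x * ((y * y) * z) := by rw [idem]
      _ = ((x * y) * y) * z := bol ..
      _ = (z * y) * (x * y) := li ..
      _ = (z * x) * (y * y) := med ..
      _ = (z * x) * y := by rw [idem]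
  -- swap in second argument
  have swap : ∀ a b c : S, a * (b * c) = a * (c * b) := by
    intro a b c
    calc a * (b * c) = (c * a) * b := star ..
      _ = (b * a) * c := li ..
      _ = a * (c * b) := (star ..).symm
  intro a b c
  calc a * (b * c) = a * (c * b) := swap ..
    _ = a * ((c * c) * b) := by rw [idem]
    _ = a * ((b * c) * c) := by rw [li]
    _ = ((a * b) * c) * c := bol ..
    _ = (c * c) * (a * b) := li ..
    _ = c * (a * b) := by rw [idem]
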